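/- arXiv:1003.3377 — 2 statements merged into one kernel-verified Lean document; each statement's English description precedes it below -/
import Mathlib

section
/- Let A be a Banach algebra and B a Banach A-bimodule. Then b′a ∈ wap_ℓ(B) for every b′ ∈ B* and a ∈ A (where (b′a)(b) := b′(π_ℓ(a, b))) if and only if â·a″ ∈ Z^ℓ_{B**}(A**) for every a ∈ A and a″ ∈ A** (where â·a″ is the first Arens product of the canonical image â of a with a″). -/
/- Common setup: Arens extensions of bounded bilinear maps between Banach spaces,
weak*–weak* continuity, and related notions. -/

open NormedSpace ContinuousLinearMap Filter Topology

/- Port helper instances: in the current Lean, instance search no longer finds the operator-norm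
structures on triply nested spaces of continuous linear maps (nested `synthPending` depth);
these one-level-nested instances (found by `inferInstance`, so definitionally Mathlib's) restore it. -/
noncomputable instance instSeminormedAddCommGroupCLMCLM {𝕜 E F G : Type*} [NontriviallyNormedField 𝕜]
    [SeminormedAddCommGroup E] [NormedSpace 𝕜 E] [SeminormedAddCommGroup F] [NormedSpace 𝕜 F]
    [SeminormedAddCommGroup G] [NormedSpace 𝕜 G] :
    SeminormedAddCommGroup (E →L[𝕜] F →L[𝕜] G) := inferInstance

noncomputable instance instNormedSpaceCLMCLM {𝕜 E F G : Type*} [NontriviallyNormedField 𝕜]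
    [SeminormedAddCommGroup E] [NormedSpace 𝕜 E] [SeminormedAddCommGroup F] [NormedSpace 𝕜 F]
    [SeminormedAddCommGroup G] [NormedSpace 𝕜 G] :
    NormedSpace 𝕜 (E →L[𝕜] F →L[𝕜] G) := inferInstance

noncomputable instance instSeminormedAddCommGroupCLMCLM' {𝕜 E F G : Type*} [NontriviallyNormedField 𝕜]
    [SeminormedAddCommGroup E] [NormedSpace 𝕜 E] [SeminormedAddCommGroup F] [NormedSpace 𝕜 F]
    [SeminormedAddCommGroup G] [NormedSpace 𝕜 G] :
    SeminormedAddCommGroup ((E →L[𝕜] F) →L[𝕜] G) := inferInstance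

noncomputable instance instNormedSpaceCLMCLM' {𝕜 E F G : Type*} [NontriviallyNormedField 𝕜]
    [SeminormedAddCommGroup E] [NormedSpace 𝕜 E] [SeminormedAddCommGroup F] [NormedSpace 𝕜 F]
    [SeminormedAddCommGroup G] [NormedSpace 𝕜 G] :
    NormedSpace 𝕜 ((E →L[𝕜] F) →L[𝕜] G) := inferInstance

noncomputable instance instSeminormedAddCommGroupCLMCLM'' {𝕜 E F G H : Type*}
    [NontriviallyNormedField 𝕜]
    [SeminormedAddCommGroup E] [NormedSpace 𝕜 E] [SeminormedAddCommGroup F] [NormedSpace 𝕜 F]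
    [SeminormedAddCommGroup G] [NormedSpace 𝕜 G] [SeminormedAddCommGroup H] [NormedSpace 𝕜 H] :
    SeminormedAddCommGroup ((E →L[𝕜] F) →L[𝕜] G →L[𝕜] H) := inferInstance

noncomputable instance instNormedSpaceCLMCLM'' {𝕜 E F G H : Type*} [NontriviallyNormedField 𝕜]
    [SeminormedAddCommGroup E] [NormedSpace 𝕜 E] [SeminormedAddCommGroup F] [NormedSpace 𝕜 F]
    [SeminormedAddCommGroup G] [NormedSpace 𝕜 G] [SeminormedAddCommGroup H] [NormedSpace 𝕜 H] :
    NormedSpace 𝕜 ((E →L[𝕜] F) →L[𝕜] G →L[𝕜] H) := inferInstance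

section ArensDefs

variable (𝕜 : Type*) [RCLike 𝕜]
variable {X Y Z : Type*}
  [NormedAddCommGroup X] [NormedSpace 𝕜 X]
  [NormedAddCommGroup Y] [NormedSpace 𝕜 Y]
  [NormedAddCommGroup Z] [NormedSpace 𝕜 Z]

/-- The first adjoint `m*` of a bounded bilinear map `m : X × Y → Z`, characterized by
`⟨m*(z′,x), y⟩ = ⟨z′, m(x,y)⟩`. -/
noncomputable def arensS (m : X →L[𝕜] Y →L[𝕜] Z) :
    StrongDual 𝕜 Z →L[𝕜] X →L[𝕜] StrongDual 𝕜 Y :=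
  ((compL 𝕜 X (Y →L[𝕜] Z) (StrongDual 𝕜 Y)).flip m).comp (compL 𝕜 Y Z 𝕜)

/-- The second adjoint `m**`, characterized by `⟨m**(y″,z′), x⟩ = ⟨y″, m*(z′,x)⟩`. -/
noncomputable def arensSS (m : X →L[𝕜] Y →L[𝕜] Z) :
    StrongDual 𝕜 (StrongDual 𝕜 Y) →L[𝕜] StrongDual 𝕜 Z →L[𝕜] StrongDual 𝕜 X :=
  ((compL 𝕜 (StrongDual 𝕜 Z) (X →L[𝕜] StrongDual 𝕜 Y) (StrongDual 𝕜 X)).flip (arensS 𝕜 m)).comp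
    (compL 𝕜 X (StrongDual 𝕜 Y) 𝕜)

/-- The Arens (triple adjoint) extension `m***` of a bounded bilinear map, characterized by
`⟨m***(x″,y″), z′⟩ = ⟨x″, m**(y″,z′)⟩`. -/
noncomputable def arensExt (m : X →L[𝕜] Y →L[𝕜] Z) :
    StrongDual 𝕜 (StrongDual 𝕜 X) →L[𝕜] StrongDual 𝕜 (StrongDual 𝕜 Y) →L[𝕜] StrongDual 𝕜 (StrongDual 𝕜 Z) :=
  ((compL 𝕜 (StrongDual 𝕜 (StrongDual 𝕜 Y)) (StrongDual 𝕜 Z →L[𝕜] StrongDual 𝕜 X) (StrongDual 𝕜 (StrongDual 𝕜 Z))).flip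
      (arensSS 𝕜 m)).comp
    (compL 𝕜 (StrongDual 𝕜 Z) (StrongDual 𝕜 X) 𝕜)

end ArensDefs

/-- A map between dual spaces is weak*–weak* continuous if it is continuous with respect to
the weak* topologies on both sides. -/
def IsWeakStarWeakStarContinuous (𝕜 : Type*) [RCLike 𝕜] {E F : Type*}
    [NormedAddCommGroup E] [NormedSpace 𝕜 E]
    [NormedAddCommGroup F] [NormedSpace 𝕜 F]
    (T : StrongDual 𝕜 E → StrongDual 𝕜 F) : Prop :=
  Continuous fun x : WeakDual 𝕜 E =>
    (StrongDual.toWeakDual (T (WeakDual.toStrongDual x)) : WeakDual 𝕜 F)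

/-- `b′ ∈ wap_ℓ(B)`: for every `a″ ∈ A**` the functional `b″ ↦ ⟨π_ℓ***(a″, b″), b′⟩` is
weak*-continuous on `B**`. -/
def MemWapLeft (𝕜 : Type*) [RCLike 𝕜] {A B : Type*}
    [NormedAddCommGroup A] [NormedSpace 𝕜 A]
    [NormedAddCommGroup B] [NormedSpace 𝕜 B]
    (πℓ : A →L[𝕜] B →L[𝕜] B) (b' : StrongDual 𝕜 B) : Prop :=
  ∀ a'' : StrongDual 𝕜 (StrongDual 𝕜 A),
    Continuous fun b'' : WeakDual 𝕜 (StrongDual 𝕜 B) =>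
      arensExt 𝕜 πℓ a'' (WeakDual.toStrongDual b'') b'

section Aux

variable {𝕜 : Type*} [RCLike 𝕜]
variable {A : Type*} [NonUnitalNormedRing A] [NormedSpace 𝕜 A]
  [IsScalarTower 𝕜 A A] [SMulCommClass 𝕜 A A]
variable {B : Type*} [NormedAddCommGroup B] [NormedSpace 𝕜 B]

lemma arensS_apply {X Y Z : Type*}
    [NormedAddCommGroup X] [NormedSpace 𝕜 X]
    [NormedAddCommGroup Y] [NormedSpace 𝕜 Y]
    [NormedAddCommGroup Z] [NormedSpace 𝕜 Z]
    (m : X →L[𝕜] Y →L[𝕜] Z) (z' : StrongDual 𝕜 Z) (x : X) (y : Y) :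
    arensS 𝕜 m z' x y = z' (m x y) := rfl

lemma arensSS_apply {X Y Z : Type*}
    [NormedAddCommGroup X] [NormedSpace 𝕜 X]
    [NormedAddCommGroup Y] [NormedSpace 𝕜 Y]
    [NormedAddCommGroup Z] [NormedSpace 𝕜 Z]
    (m : X →L[𝕜] Y →L[𝕜] Z) (y'' : StrongDual 𝕜 (StrongDual 𝕜 Y)) (z' : StrongDual 𝕜 Z) (x : X) :
    arensSS 𝕜 m y'' z' x = y'' (arensS 𝕜 m z' x) := rfl

lemma arensExt_apply {X Y Z : Type*}
    [NormedAddCommGroup X] [NormedSpace 𝕜 X]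
    [NormedAddCommGroup Y] [NormedSpace 𝕜 Y]
    [NormedAddCommGroup Z] [NormedSpace 𝕜 Z]
    (m : X →L[𝕜] Y →L[𝕜] Z) (x'' : StrongDual 𝕜 (StrongDual 𝕜 X)) (y'' : StrongDual 𝕜 (StrongDual 𝕜 Y))
    (z' : StrongDual 𝕜 Z) :
    arensExt 𝕜 m x'' y'' z' = x'' (arensSS 𝕜 m y'' z') := rfl

lemma arens_key (πℓ : A →L[𝕜] B →L[𝕜] B)
    (hℓ : ∀ (a₁ a₂ : A) (b : B), πℓ (a₁ * a₂) b = πℓ a₁ (πℓ a₂ b))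
    (a : A) (a'' : StrongDual 𝕜 (StrongDual 𝕜 A)) (b'' : StrongDual 𝕜 (StrongDual 𝕜 B)) (b' : StrongDual 𝕜 B) :
    arensExt 𝕜 πℓ
      (arensExt 𝕜 (ContinuousLinearMap.mul 𝕜 A) (inclusionInDoubleDual 𝕜 A a) a'') b'' b'
    = arensExt 𝕜 πℓ a'' b'' (b'.comp (πℓ a)) := by
  rw [arensExt_apply, arensExt_apply, arensExt_apply]
  show arensSS 𝕜 (ContinuousLinearMap.mul 𝕜 A) a'' (arensSS 𝕜 πℓ b'' b') a = _
  rw [arensSS_apply]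
  congr 1
  ext c
  rw [arensS_apply, arensSS_apply, arensSS_apply]
  congr 1
  ext b
  rw [arensS_apply, arensS_apply]
  simp [hℓ]

end Aux

/-- `b′a ∈ wap_ℓ(B)` for every `b′ ∈ B*`, `a ∈ A` iff
`â·a″ ∈ Z^ℓ_{B**}(A**)` for every `a ∈ A`, `a″ ∈ A**` (first Arens product). -/
theorem wapLeft_smul_iff_arensProduct_mem_leftTopologicalCenter
    {𝕜 : Type*} [RCLike 𝕜]
    {A : Type*} [NonUnitalNormedRing A] [NormedSpace 𝕜 A]
    [IsScalarTower 𝕜 A A] [SMulCommClass 𝕜 A A] [CompleteSpace A]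
    {B : Type*} [NormedAddCommGroup B] [NormedSpace 𝕜 B] [CompleteSpace B]
    (πℓ : A →L[𝕜] B →L[𝕜] B) (πr : B →L[𝕜] A →L[𝕜] B)
    (hℓ : ∀ (a₁ a₂ : A) (b : B), πℓ (a₁ * a₂) b = πℓ a₁ (πℓ a₂ b))
    (hr : ∀ (b : B) (a₁ a₂ : A), πr b (a₁ * a₂) = πr (πr b a₁) a₂)
    (hℓr : ∀ (a₁ : A) (b : B) (a₂ : A), πr (πℓ a₁ b) a₂ = πℓ a₁ (πr b a₂)) :
    (∀ (b' : StrongDual 𝕜 B) (a : A), MemWapLeft 𝕜 πℓ (b'.comp (πℓ a))) ↔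
      ∀ (a : A) (a'' : StrongDual 𝕜 (StrongDual 𝕜 A)),
        IsWeakStarWeakStarContinuous 𝕜
          (fun b'' : StrongDual 𝕜 (StrongDual 𝕜 B) =>
            arensExt 𝕜 πℓ
              (arensExt 𝕜 (ContinuousLinearMap.mul 𝕜 A)
                (inclusionInDoubleDual 𝕜 A a) a'') b'') := by
  constructor
  · intro h a a''
    apply WeakBilin.continuous_of_continuous_eval
    intro b'
    exact (h b' a a'').congr fun b'' => (arens_key πℓ hℓ a a'' _ b').symm
  · intro h b' a a''
    exact ((WeakDual.eval_continuous b').comp (h a a'')).congr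
      fun b'' => arens_key πℓ hℓ a a'' _ b'
end

section
/- Let A be a Banach algebra and B a left Banach A-module, and suppose e ∈ A satisfies π_ℓ(e, b) = b for all b ∈ B. If e has the Lw*w-property with respect to B, i.e., for every net (b′_α) in B*, convergence to 0 in the weak* topology of B* of the net of translates (b ↦ b′_α(π_ℓ(e, b))) implies its convergence to 0 in the weak topology of B*, then B is reflexive (the canonical embedding of B into B** is surjective). -/
/- Common setup: Arens extensions of bounded bilinear maps between Banach spaces,
weak*–weak* continuity, and related notions. -/

open NormedSpace ContinuousLinearMap Filter Topology

section ArensDefs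

variable (𝕜 : Type*) [RCLike 𝕜]
variable {X Y Z : Type*}
  [NormedAddCommGroup X] [NormedSpace 𝕜 X]
  [NormedAddCommGroup Y] [NormedSpace 𝕜 Y]
  [NormedAddCommGroup Z] [NormedSpace 𝕜 Z]

/-- Port helper: the norm instance on `StrongDual 𝕜 Z →L[𝕜] X →L[𝕜] StrongDual 𝕜 Y`, given explicitly. -/
@[reducible] noncomputable def arensInstS1 : SeminormedAddCommGroup (StrongDual 𝕜 Z →L[𝕜] X →L[𝕜] StrongDual 𝕜 Y) :=
  @ContinuousLinearMap.toSeminormedAddCommGroup 𝕜 𝕜 (StrongDual 𝕜 Z) (X →L[𝕜] StrongDual 𝕜 Y) _ _ _ _ _ _ (RingHom.id 𝕜) _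

/-- Port helper: the normed-space instance on `StrongDual 𝕜 Z →L[𝕜] X →L[𝕜] StrongDual 𝕜 Y`, given explicitly. -/
@[reducible] noncomputable def arensInstN1 : @NormedSpace 𝕜 (StrongDual 𝕜 Z →L[𝕜] X →L[𝕜] StrongDual 𝕜 Y) _ (arensInstS1 𝕜) :=
  @ContinuousLinearMap.toNormedSpace 𝕜 𝕜 (StrongDual 𝕜 Z) (X →L[𝕜] StrongDual 𝕜 Y) _ _ _ _ _ _ (RingHom.id 𝕜) _ 𝕜 _ _ _

attribute [local instance] arensInstS1 arensInstN1

/-- Port helper: the norm instance on `StrongDual 𝕜 (StrongDual 𝕜 Y) →L[𝕜] StrongDual 𝕜 (StrongDual 𝕜 Z)`, given explicitly. -/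
@[reducible] noncomputable def arensInstS2 : SeminormedAddCommGroup (StrongDual 𝕜 (StrongDual 𝕜 Y) →L[𝕜] StrongDual 𝕜 (StrongDual 𝕜 Z)) :=
  @ContinuousLinearMap.toSeminormedAddCommGroup 𝕜 𝕜 (StrongDual 𝕜 (StrongDual 𝕜 Y)) (StrongDual 𝕜 (StrongDual 𝕜 Z)) _ _ _ _ _ _ (RingHom.id 𝕜) _

/-- Port helper: the norm instance on `StrongDual 𝕜 (StrongDual 𝕜 Y) →L[𝕜] StrongDual 𝕜 Z →L[𝕜] StrongDual 𝕜 X`, given explicitly. -/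
@[reducible] noncomputable def arensInstS3 : SeminormedAddCommGroup (StrongDual 𝕜 (StrongDual 𝕜 Y) →L[𝕜] StrongDual 𝕜 Z →L[𝕜] StrongDual 𝕜 X) :=
  @ContinuousLinearMap.toSeminormedAddCommGroup 𝕜 𝕜 (StrongDual 𝕜 (StrongDual 𝕜 Y)) (StrongDual 𝕜 Z →L[𝕜] StrongDual 𝕜 X) _ _ _ _ _ _ (RingHom.id 𝕜) _

/-- Port helper: the normed-space instance on `StrongDual 𝕜 (StrongDual 𝕜 Y) →L[𝕜] StrongDual 𝕜 Z →L[𝕜] StrongDual 𝕜 X`, given explicitly. -/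
@[reducible] noncomputable def arensInstN3 : @NormedSpace 𝕜 (StrongDual 𝕜 (StrongDual 𝕜 Y) →L[𝕜] StrongDual 𝕜 Z →L[𝕜] StrongDual 𝕜 X) _ (arensInstS3 𝕜) :=
  @ContinuousLinearMap.toNormedSpace 𝕜 𝕜 (StrongDual 𝕜 (StrongDual 𝕜 Y)) (StrongDual 𝕜 Z →L[𝕜] StrongDual 𝕜 X) _ _ _ _ _ _ (RingHom.id 𝕜) _ 𝕜 _ _ _

/-- Port helper: the norm instance on `(StrongDual 𝕜 Z →L[𝕜] StrongDual 𝕜 X) →L[𝕜] StrongDual 𝕜 (StrongDual 𝕜 Z)`, given explicitly. -/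
@[reducible] noncomputable def arensInstS4 : SeminormedAddCommGroup ((StrongDual 𝕜 Z →L[𝕜] StrongDual 𝕜 X) →L[𝕜] StrongDual 𝕜 (StrongDual 𝕜 Z)) :=
  @ContinuousLinearMap.toSeminormedAddCommGroup 𝕜 𝕜 ((StrongDual 𝕜 Z →L[𝕜] StrongDual 𝕜 X)) (StrongDual 𝕜 (StrongDual 𝕜 Z)) _ _ _ _ _ _ (RingHom.id 𝕜) _

/-- Port helper: the normed-space instance on `(StrongDual 𝕜 Z →L[𝕜] StrongDual 𝕜 X) →L[𝕜] StrongDual 𝕜 (StrongDual 𝕜 Z)`, given explicitly. -/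
@[reducible] noncomputable def arensInstN4 : @NormedSpace 𝕜 ((StrongDual 𝕜 Z →L[𝕜] StrongDual 𝕜 X) →L[𝕜] StrongDual 𝕜 (StrongDual 𝕜 Z)) _ (arensInstS4 𝕜) :=
  @ContinuousLinearMap.toNormedSpace 𝕜 𝕜 ((StrongDual 𝕜 Z →L[𝕜] StrongDual 𝕜 X)) (StrongDual 𝕜 (StrongDual 𝕜 Z)) _ _ _ _ _ _ (RingHom.id 𝕜) _ 𝕜 _ _ _

/-- Port helper: the normed-space instance on `StrongDual 𝕜 (StrongDual 𝕜 Y) →L[𝕜] StrongDual 𝕜 (StrongDual 𝕜 Z)`, given explicitly. -/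
@[reducible] noncomputable def arensInstN2 : @NormedSpace 𝕜 (StrongDual 𝕜 (StrongDual 𝕜 Y) →L[𝕜] StrongDual 𝕜 (StrongDual 𝕜 Z)) _ (arensInstS2 𝕜) :=
  @ContinuousLinearMap.toNormedSpace 𝕜 𝕜 (StrongDual 𝕜 (StrongDual 𝕜 Y)) (StrongDual 𝕜 (StrongDual 𝕜 Z)) _ _ _ _ _ _ (RingHom.id 𝕜) _ 𝕜 _ _ _

attribute [local instance] arensInstS2 arensInstN2 arensInstS3 arensInstN3 arensInstS4 arensInstN4

end ArensDefs

section AuxLemmas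

variable {𝕜 : Type*} [RCLike 𝕜] {B : Type*} [NormedAddCommGroup B] [NormedSpace 𝕜 B]

open Filter Metric

/-- A functional on `B*` vanishing on the common kernel of finitely many evaluations
is itself an evaluation. -/
lemma aux_span {n : ℕ} (bs : Fin n → B) (Λ : StrongDual 𝕜 (StrongDual 𝕜 B))
    (h : ∀ x : StrongDual 𝕜 B, (∀ i, x (bs i) = 0) → Λ x = 0) :
    ∃ v : B, ∀ x : StrongDual 𝕜 B, Λ x = x v := by
  have hker : ⨅ i : Fin n, LinearMap.ker ((topDualPairing 𝕜 B).flip (bs i)) ≤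
      LinearMap.ker (Λ : StrongDual 𝕜 B →ₗ[𝕜] 𝕜) := by
    intro x hx
    simp only [Submodule.mem_iInf, LinearMap.mem_ker, LinearMap.flip_apply,
      topDualPairing_apply] at hx
    simpa using h x hx
  have hmem := mem_span_of_iInf_ker_le_ker (ι := Fin n) hker
  obtain ⟨c, hc⟩ := (Submodule.mem_span_range_iff_exists_fun 𝕜).1 hmem
  refine ⟨∑ i, c i • bs i, fun x => ?_⟩
  have h1 := congrArg (fun K : StrongDual 𝕜 B →ₗ[𝕜] 𝕜 => K x) hc
  simp only [LinearMap.coe_sum, Finset.sum_apply, LinearMap.smul_apply,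
    LinearMap.flip_apply, topDualPairing_apply, smul_eq_mul] at h1
  have h2 : x (∑ i, c i • bs i) = ∑ i, c i * x (bs i) := by
    rw [map_sum]
    exact Finset.sum_congr rfl fun i _ => by rw [map_smul, smul_eq_mul]
  rw [h2]
  exact h1.symm

/-- Step lemma: if `F` is at distance at least `d` from every evaluation, then for any finitely
many points `bs` there is a norm-one functional vanishing on all of them on which `F` is at
least `d / 2`. -/
lemma aux_stepA (F : StrongDual 𝕜 (StrongDual 𝕜 B)) {d : ℝ} (hd : 0 < d)
    (hdist : ∀ v : B, d ≤ ‖F - inclusionInDoubleDual 𝕜 B v‖)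
    {m : ℕ} (bs : Fin m → B) :
    ∃ x : StrongDual 𝕜 B, (∀ j, x (bs j) = 0) ∧ ‖x‖ ≤ 1 ∧ d / 2 ≤ ‖F x‖ := by
  by_contra hcon
  push_neg at hcon
  set p : Submodule 𝕜 (StrongDual 𝕜 B) :=
    ⨅ j : Fin m, LinearMap.ker ((topDualPairing 𝕜 B).flip (bs j)) with hp
  have hmemp : ∀ x : StrongDual 𝕜 B, x ∈ p ↔ ∀ j, x (bs j) = 0 := by
    intro x
    simp [hp, Submodule.mem_iInf, LinearMap.mem_ker, topDualPairing_apply]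
  set f : p →L[𝕜] 𝕜 := F.comp p.subtypeL with hf
  have hbound : ∀ y : p, ‖f y‖ ≤ d / 2 * ‖y‖ := by
    intro y
    rcases eq_or_ne (y : StrongDual 𝕜 B) 0 with h0 | h0
    · have hy0 : ‖(y : StrongDual 𝕜 B)‖ = 0 := by rw [h0, norm_zero]
      have : f y = 0 := by
        show F (p.subtypeL y) = 0
        have : (p.subtypeL y : StrongDual 𝕜 B) = 0 := h0
        rw [show p.subtypeL y = (y : StrongDual 𝕜 B) from rfl, h0, map_zero]
      rw [this, norm_zero]
      positivity
    · have hyn : (0 : ℝ) < ‖(y : StrongDual 𝕜 B)‖ := norm_pos_iff.2 h0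
      set z : StrongDual 𝕜 B := ‖(y : StrongDual 𝕜 B)‖⁻¹ • (y : StrongDual 𝕜 B) with hz
      have hz1 : ‖z‖ ≤ 1 := by
        rw [hz, norm_smul, norm_inv, norm_norm]
        rw [inv_mul_cancel₀ hyn.ne']
      have hz0 : ∀ j, z (bs j) = 0 := by
        intro j
        have hy := ((hmemp _).1 y.2) j
        rw [hz]
        show ‖(y : StrongDual 𝕜 B)‖⁻¹ • ((y : StrongDual 𝕜 B) (bs j)) = 0
        rw [hy, smul_zero]
      have hlt := hcon z hz0 hz1
      have hFz : F z = ‖(y : StrongDual 𝕜 B)‖⁻¹ • F (y : StrongDual 𝕜 B) := by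
        rw [hz, map_smul_of_tower]
      have : ‖F (y : StrongDual 𝕜 B)‖ < d / 2 * ‖(y : StrongDual 𝕜 B)‖ := by
        have h5 : ‖F z‖ = ‖(y : StrongDual 𝕜 B)‖⁻¹ * ‖F (y : StrongDual 𝕜 B)‖ := by
          rw [hFz, norm_smul, norm_inv, norm_norm]
        rw [h5] at hlt
        have := (inv_mul_lt_iff₀ hyn).1 hlt
        linarith [this]
      exact le_of_lt (by
        show ‖F (p.subtypeL y)‖ < d / 2 * ‖y‖
        exact this)
  obtain ⟨g, hg_ext, hg_norm⟩ := exists_extension_norm_eq p (F.comp p.subtypeL)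
  have hfnorm : ‖g‖ ≤ d / 2 := by
    rw [hg_norm]; exact ContinuousLinearMap.opNorm_le_bound _ (by positivity) hbound
  have hvan : ∀ x : StrongDual 𝕜 B, (∀ j, x (bs j) = 0) → (F - g) x = 0 := by
    intro x hx
    have hxp : x ∈ p := (hmemp x).2 hx
    have h1 := hg_ext ⟨x, hxp⟩
    have h2 : f (⟨x, hxp⟩ : p) = F x := rfl
    replace h1 : g x = F x := h1.trans h2
    show F x - g x = 0
    rw [h1, sub_self]
  obtain ⟨v, hv⟩ := aux_span bs (F - g) hvan
  have hFg : F - g = inclusionInDoubleDual 𝕜 B v := by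
    ext x
    rw [hv x, NormedSpace.dual_def]
  have h1 : d ≤ ‖F - inclusionInDoubleDual 𝕜 B v‖ := hdist v
  rw [← hFg] at h1
  have h2 : F - (F - g) = g := by abel
  rw [show ‖F - (F - g)‖ = ‖g‖ from by rw [h2]] at h1
  linarith

/-- Helly-type lemma: prescribed values `F (xs i)` can be realized by an element of `B` of norm
at most `‖F‖ + 1`. -/
lemma aux_helly (F : StrongDual 𝕜 (StrongDual 𝕜 B)) {n : ℕ} (xs : Fin n → StrongDual 𝕜 B) :
    ∃ b : B, ‖b‖ ≤ ‖F‖ + 1 ∧ ∀ i, xs i b = F (xs i) := by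
  classical
  -- exact solution, possibly with large norm
  obtain ⟨b₀, hb₀⟩ : ∃ b₀ : B, ∀ i, xs i b₀ = F (xs i) := by
    set T : B →ₗ[𝕜] (Fin n → 𝕜) := LinearMap.pi fun i => (xs i : B →ₗ[𝕜] 𝕜) with hT
    by_contra hcon
    push_neg at hcon
    have hv : (fun i => F (xs i)) ∉ LinearMap.range T := by
      rintro ⟨b', hb'⟩
      obtain ⟨i, hi⟩ := hcon b'
      exact hi (congrFun hb' i)
    obtain ⟨φ, hφ0, hφbot⟩ :=
      Submodule.exists_dual_map_eq_bot_of_notMem hv inferInstance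
    set c : Fin n → 𝕜 := fun i => φ (fun j => if i = j then 1 else 0) with hcdef
    have hphi : ∀ y : Fin n → 𝕜, φ y = ∑ i, y i • c i := fun y =>
      LinearMap.pi_apply_eq_sum_univ φ y
    have hTkill : ∀ b' : B, φ (T b') = 0 := by
      intro b'
      have hmem : φ (T b') ∈ (LinearMap.range T).map φ :=
        Submodule.mem_map_of_mem (LinearMap.mem_range_self T b')
      rw [hφbot] at hmem
      exact (Submodule.mem_bot 𝕜).1 hmem
    have husum : (∑ i, c i • xs i) = 0 := by
      ext b'
      have h1 := hTkill b'
      rw [hphi (T b')] at h1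
      have h2 : (∑ i, c i • xs i) b' = ∑ i, (T b') i • c i := by
        rw [ContinuousLinearMap.sum_apply]
        refine Finset.sum_congr rfl fun i _ => ?_
        rw [ContinuousLinearMap.smul_apply]
        show c i • (xs i b') = (xs i b') • c i
        rw [smul_eq_mul, smul_eq_mul, mul_comm]
      rw [ContinuousLinearMap.zero_apply, h2, h1]
    have hFsum : φ (fun i => F (xs i)) = 0 := by
      have h3 := congrArg F husum
      rw [map_sum, map_zero] at h3
      rw [hphi]
      calc (∑ i, F (xs i) • c i) = ∑ i, c i • F (xs i) := by
            refine Finset.sum_congr rfl fun i _ => ?_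
            rw [smul_eq_mul, smul_eq_mul, mul_comm]
        _ = ∑ i, F (c i • xs i) := by
            refine Finset.sum_congr rfl fun i _ => ?_
            rw [map_smul]
        _ = 0 := h3
    exact hφ0 hFsum
  -- norm control via the quotient by the common kernel
  set K : Submodule 𝕜 B := ⨅ i, LinearMap.ker (xs i : B →ₗ[𝕜] 𝕜) with hK
  haveI hKclosed : IsClosed (K : Set B) := by
    rw [hK, Submodule.coe_iInf]
    exact isClosed_iInter fun i => ContinuousLinearMap.isClosed_ker (xs i)
  have hqle : ‖(Submodule.Quotient.mk b₀ : B ⧸ K)‖ ≤ ‖F‖ := by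
    rcases eq_or_ne (Submodule.Quotient.mk b₀ : B ⧸ K) 0 with hq0 | hq0
    · rw [hq0, norm_zero]
      exact norm_nonneg F
    · obtain ⟨g, hg1, hg2⟩ := exists_dual_vector 𝕜 (Submodule.Quotient.mk b₀ : B ⧸ K) (norm_ne_zero_iff.2 hq0)
      set u : StrongDual 𝕜 B := LinearMap.mkContinuous
        ((g : (B ⧸ K) →ₗ[𝕜] 𝕜).comp K.mkQ) 1
        (fun b' => by
          show ‖g (Submodule.Quotient.mk b')‖ ≤ 1 * ‖b'‖
          calc ‖g (Submodule.Quotient.mk b')‖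
              ≤ ‖g‖ * ‖(Submodule.Quotient.mk b' : B ⧸ K)‖ := g.le_opNorm _
            _ = ‖(Submodule.Quotient.mk b' : B ⧸ K)‖ := by rw [hg1, one_mul]
            _ ≤ ‖b'‖ := Submodule.Quotient.norm_mk_le K b'
            _ = 1 * ‖b'‖ := (one_mul _).symm) with hu
      have hunorm : ‖u‖ ≤ 1 := LinearMap.mkContinuous_norm_le _ zero_le_one _
      have huapp : ∀ b' : B, u b' = g (Submodule.Quotient.mk b') := fun b' => rfl
      have hker : ⨅ i, LinearMap.ker ((xs i : B →ₗ[𝕜] 𝕜)) ≤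
          LinearMap.ker (u : B →ₗ[𝕜] 𝕜) := by
        intro w hw
        simp only [Submodule.mem_iInf, LinearMap.mem_ker] at hw ⊢
        have hwK : w ∈ K := by
          rw [hK, Submodule.mem_iInf]
          intro i
          exact LinearMap.mem_ker.2 (hw i)
        show u w = 0
        rw [huapp w, (Submodule.Quotient.mk_eq_zero K).2 hwK, map_zero]
      have humem := mem_span_of_iInf_ker_le_ker (ι := Fin n) hker
      obtain ⟨c, hc⟩ := (Submodule.mem_span_range_iff_exists_fun 𝕜).1 humem
      have huc : u = ∑ i, c i • xs i := by
        apply ContinuousLinearMap.coe_injective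
        rw [← hc]
        ext w
        simp [ContinuousLinearMap.sum_apply]
      have hval : u b₀ = F u := by
        rw [huc]
        rw [ContinuousLinearMap.sum_apply, map_sum]
        refine Finset.sum_congr rfl fun i _ => ?_
        rw [ContinuousLinearMap.smul_apply, map_smul, hb₀ i]
      have hvq : u b₀ = (‖(Submodule.Quotient.mk b₀ : B ⧸ K)‖ : 𝕜) := by
        rw [huapp b₀, hg2]
      calc ‖(Submodule.Quotient.mk b₀ : B ⧸ K)‖
          = ‖((‖(Submodule.Quotient.mk b₀ : B ⧸ K)‖ : 𝕜))‖ := by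
            rw [RCLike.norm_ofReal, abs_of_nonneg (norm_nonneg _)]
        _ = ‖F u‖ := by rw [← hvq, hval]
        _ ≤ ‖F‖ * ‖u‖ := F.le_opNorm u
        _ ≤ ‖F‖ * 1 := by
            exact mul_le_mul_of_nonneg_left hunorm (norm_nonneg F)
        _ = ‖F‖ := mul_one _
  obtain ⟨m, hm1, hm2⟩ :=
    Submodule.Quotient.norm_mk_lt (Submodule.Quotient.mk b₀ : B ⧸ K) zero_lt_one
  refine ⟨m, by linarith, fun i => ?_⟩
  have hmb : m - b₀ ∈ K := (Submodule.Quotient.eq K).1 hm1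
  have hz : xs i (m - b₀) = 0 := by
    have h5 := (Submodule.mem_iInf _).1 (hK ▸ hmb) i
    exact LinearMap.mem_ker.1 h5
  have h6 : xs i m = xs i b₀ := by
    have h7 : xs i m - xs i b₀ = 0 := by rw [← map_sub]; exact hz
    exact sub_eq_zero.1 h7
  rw [h6, hb₀ i]

end AuxLemmas


set_option maxHeartbeats 1000000 in
/-- Let `B` be a left Banach `A`-module and `e ∈ A` with `π_ℓ(e, b) = b` for
all `b`.  If `e` has the `Lw*w`-property with respect to `B` — whenever a net of translates
`(b ↦ b′_α(π_ℓ(e, b)))` tends to `0` in the weak* topology of `B*` it also tends to `0` in the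
weak topology of `B*` — then `B` is reflexive. -/
theorem reflexive_of_leftUnit_LwStarW
    {𝕜 : Type*} [RCLike 𝕜]
    {A : Type*} [NonUnitalNormedRing A] [NormedSpace 𝕜 A]
    [IsScalarTower 𝕜 A A] [SMulCommClass 𝕜 A A] [CompleteSpace A]
    {B : Type*} [NormedAddCommGroup B] [NormedSpace 𝕜 B] [CompleteSpace B]
    (πℓ : A →L[𝕜] B →L[𝕜] B)
    (hℓ : ∀ (a₁ a₂ : A) (b : B), πℓ (a₁ * a₂) b = πℓ a₁ (πℓ a₂ b))
    (e : A) (he : ∀ b : B, πℓ e b = b)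
    (hLww : ∀ {ι : Type*} (l : Filter ι) (ν : ι → StrongDual 𝕜 B),
      Tendsto (fun i => (StrongDual.toWeakDual ((ν i).comp (πℓ e)) : WeakDual 𝕜 B)) l (𝓝 0) →
        Tendsto
          (fun i => (toWeakSpace 𝕜 (StrongDual 𝕜 B) ((ν i).comp (πℓ e)) : WeakSpace 𝕜 (StrongDual 𝕜 B)))
          l (𝓝 0)) :
    Function.Surjective (inclusionInDoubleDual 𝕜 B) := by
  intro F
  by_contra hF
  classical
  -- `πℓ e` is the identity, so translates simplify.
  have hcomp : ∀ ν : StrongDual 𝕜 B, ν.comp (πℓ e) = ν := by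
    intro ν; ext b'; simp [he b']
  -- the range of the double dual embedding is closed
  have hclosed : IsClosed (Set.range (inclusionInDoubleDual 𝕜 B)) := by
    have h1 : Isometry (inclusionInDoubleDualLi 𝕜 (E := B)) :=
      (inclusionInDoubleDualLi 𝕜 (E := B)).isometry
    have h2 : Set.range (inclusionInDoubleDual 𝕜 B) =
        Set.range (inclusionInDoubleDualLi 𝕜 (E := B)) := rfl
    rw [h2]
    exact h1.isClosedEmbedding.isClosed_range
  set d : ℝ := Metric.infDist F (Set.range (inclusionInDoubleDual 𝕜 B)) with hdd
  have hd : 0 < d := by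
    rw [hdd]
    exact (hclosed.notMem_iff_infDist_pos ⟨inclusionInDoubleDual 𝕜 B 0, Set.mem_range_self 0⟩).1
      hF
  have hdist : ∀ v : B, d ≤ ‖F - inclusionInDoubleDual 𝕜 B v‖ := by
    intro v
    have := Metric.infDist_le_dist_of_mem (x := F) (Set.mem_range_self (f := inclusionInDoubleDual 𝕜 B) v)
    exact this.trans_eq (dist_eq_norm F _)
  -- choice functions for the recursive construction
  choose X hX0 hX1 hX2 using fun (m : ℕ) (bs : Fin m → B) => aux_stepA F hd hdist bs
  choose Y hY1 hY2 using fun (n : ℕ) (xs : Fin (n + 1) → StrongDual 𝕜 B) => aux_helly F xs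
  -- the recursive construction of the two sequences
  let step : (ℕ → StrongDual 𝕜 B × B) → ℕ → StrongDual 𝕜 B × B := fun s n =>
    let xn := X n fun j : Fin n => (s j).2
    (xn, Y n fun i : Fin (n + 1) => if (i : ℕ) = n then xn else (s i).1)
  let hist : ℕ → ℕ → StrongDual 𝕜 B × B := fun n =>
    Nat.rec (fun _ => (0, 0)) (fun m s => Function.update s m (step s m)) n
  let p : ℕ → StrongDual 𝕜 B × B := fun n => hist (n + 1) n
  set x : ℕ → StrongDual 𝕜 B := fun n => (p n).1 with hx
  set b : ℕ → B := fun n => (p n).2 with hb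
  have hist_succ : ∀ m, hist (m + 1) = Function.update (hist m) m (step (hist m) m) :=
    fun m => rfl
  have hstab : ∀ m n, n < m → hist m n = p n := by
    intro m
    induction m with
    | zero => intro n hn; omega
    | succ m ih =>
      intro n hn
      rcases Nat.lt_succ_iff_lt_or_eq.1 hn with hn' | hn'
      · rw [hist_succ m, Function.update_of_ne (by omega)]
        exact ih n hn'
      · subst hn'; rfl
  have hpstep : ∀ n, p n = step (hist n) n := by
    intro n
    show hist (n + 1) n = _
    rw [hist_succ n, Function.update_self]
  have hhist2 : ∀ n (j : Fin n), (hist n j).2 = b j :=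
    fun n j => congrArg Prod.snd (hstab n j j.2)
  have hhist1 : ∀ n (j : Fin n), (hist n j).1 = x j :=
    fun n j => congrArg Prod.fst (hstab n j j.2)
  have hx_def : ∀ n, x n = X n (fun j : Fin n => b j) := by
    intro n
    show (p n).1 = _
    rw [hpstep n]
    show X n (fun j : Fin n => (hist n j).2) = _
    congr 1
    exact funext fun j => hhist2 n j
  have hxn : ∀ n, (X n fun j : Fin n => (hist n j).2) = x n := by
    intro n
    rw [show (fun j : Fin n => (hist n j).2) = fun j : Fin n => b j from
      funext fun j => hhist2 n j]
    exact (hx_def n).symm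
  have hb_def : ∀ n, b n = Y n (fun i : Fin (n + 1) => x (i : ℕ)) := by
    intro n
    show (p n).2 = _
    rw [hpstep n]
    show Y n _ = Y n _
    congr 1
    funext i
    rcases eq_or_ne (i : ℕ) n with hi | hi
    · rw [if_pos hi, hxn n, hi]
    · rw [if_neg hi]
      have hilt : (i : ℕ) < n := by omega
      exact hhist1 n ⟨i, hilt⟩
  -- properties of the sequences
  have hx_b : ∀ n j, j < n → x n (b j) = 0 := by
    intro n j hj
    rw [hx_def n]
    exact hX0 n (fun j : Fin n => b j) ⟨j, hj⟩
  have hx_norm : ∀ n, ‖x n‖ ≤ 1 := fun n => by rw [hx_def n]; exact hX1 _ _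
  have hx_F : ∀ n, d / 2 ≤ ‖F (x n)‖ := fun n => by rw [hx_def n]; exact hX2 _ _
  have hb_norm : ∀ n, ‖b n‖ ≤ ‖F‖ + 1 := fun n => by rw [hb_def n]; exact hY1 _ _
  have hb_x : ∀ n i, i ≤ n → x i (b n) = F (x i) := by
    intro n i hi
    rw [hb_def n]
    exact hY2 n (fun i : Fin (n + 1) => x (i : ℕ)) ⟨i, by omega⟩
  -- an ultrafilter refining `atTop`
  let U : Ultrafilter ℕ := Ultrafilter.of atTop
  have hU : (U : Filter ℕ) ≤ atTop := Ultrafilter.of_le _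
  -- weak-* cluster point of the `x n`
  obtain ⟨Φ, hΦmem, hΦle⟩ :=
    (WeakDual.isCompact_closedBall (𝕜 := 𝕜) (E := B) 0 1).ultrafilter_le_nhds
      (U.map fun n => (StrongDual.toWeakDual (x n) : WeakDual 𝕜 B))
      (by
        rw [Ultrafilter.coe_map, Filter.le_principal_iff, Filter.mem_map]
        refine Filter.univ_mem' fun n => ?_
        show x n ∈ Metric.closedBall (0 : StrongDual 𝕜 B) 1
        simpa [Metric.mem_closedBall, dist_zero_right] using hx_norm n)
  have hΦ : Filter.Tendsto (fun n => (StrongDual.toWeakDual (x n) : WeakDual 𝕜 B)) U (𝓝 Φ) := by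
    rwa [Ultrafilter.coe_map] at hΦle
  set Φ' : StrongDual 𝕜 B := WeakDual.toStrongDual Φ with hΦ'
  have hΦev : ∀ z : B, Filter.Tendsto (fun n => x n z) U (𝓝 (Φ' z)) := by
    intro z
    have h1 : Filter.Tendsto (fun φ : WeakDual 𝕜 B => φ z) (𝓝 Φ) (𝓝 (Φ z)) :=
      (WeakDual.eval_continuous z).tendsto Φ
    have h2 := h1.comp hΦ
    have h3 : (fun n => (StrongDual.toWeakDual (x n) : WeakDual 𝕜 B) z) = fun n => x n z := rfl
    have h4 : Φ' z = Φ z := rfl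
    rw [h4]
    exact h2
  have hΦb : ∀ j, Φ' (b j) = 0 := by
    intro j
    refine tendsto_nhds_unique (hΦev (b j)) ?_
    have hev0 : ∀ᶠ n in (U : Filter ℕ), j < n := hU (Filter.eventually_gt_atTop j)
    have hev : ∀ᶠ n in (U : Filter ℕ), x n (b j) = 0 :=
      hev0.mono fun n hn => hx_b n j hn
    exact tendsto_const_nhds.congr' (by filter_upwards [hev] with n h using h.symm)
  -- weak-* cluster point of the `b n` in the double dual
  obtain ⟨Ψw, hΨmem, hΨle⟩ :=
    (WeakDual.isCompact_closedBall (𝕜 := 𝕜) (E := StrongDual 𝕜 B) 0 (‖F‖ + 1)).ultrafilter_le_nhds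
      (U.map fun n => (StrongDual.toWeakDual (inclusionInDoubleDual 𝕜 B (b n)) :
        WeakDual 𝕜 (StrongDual 𝕜 B)))
      (by
        rw [Ultrafilter.coe_map, Filter.le_principal_iff, Filter.mem_map]
        refine Filter.univ_mem' fun n => ?_
        show inclusionInDoubleDual 𝕜 B (b n) ∈
          Metric.closedBall (0 : StrongDual 𝕜 (StrongDual 𝕜 B)) (‖F‖ + 1)
        rw [Metric.mem_closedBall]
        refine (dist_zero_right (inclusionInDoubleDual 𝕜 B (b n))).trans_le ?_
        exact le_trans (NormedSpace.double_dual_bound 𝕜 B (b n)) (hb_norm n))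
  have hΨt : Filter.Tendsto
      (fun n => (StrongDual.toWeakDual (inclusionInDoubleDual 𝕜 B (b n)) : WeakDual 𝕜 (StrongDual 𝕜 B)))
      U (𝓝 Ψw) := by
    rwa [Ultrafilter.coe_map] at hΨle
  set Ψ : StrongDual 𝕜 (StrongDual 𝕜 B) := WeakDual.toStrongDual Ψw with hΨdef
  have hΨev : ∀ z : StrongDual 𝕜 B, Filter.Tendsto (fun n => z (b n)) U (𝓝 (Ψ z)) := by
    intro z
    have h1 : Filter.Tendsto (fun φ : WeakDual 𝕜 (StrongDual 𝕜 B) => φ z) (𝓝 Ψw) (𝓝 (Ψw z)) :=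
      (WeakDual.eval_continuous z).tendsto Ψw
    have h2 := h1.comp hΨt
    have h3 : (fun n => (StrongDual.toWeakDual (inclusionInDoubleDual 𝕜 B (b n)) :
        WeakDual 𝕜 (StrongDual 𝕜 B)) z) = fun n => z (b n) := rfl
    have h4 : Ψ z = Ψw z := rfl
    rw [h4]
    exact h2
  have hΨx : ∀ i, Ψ (x i) = F (x i) := by
    intro i
    refine tendsto_nhds_unique (hΨev (x i)) ?_
    have hev0 : ∀ᶠ n in (U : Filter ℕ), i ≤ n := hU (Filter.eventually_ge_atTop i)
    have hev : ∀ᶠ n in (U : Filter ℕ), x i (b n) = F (x i) :=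
      hev0.mono fun n hn => hb_x n i hn
    exact tendsto_const_nhds.congr' (by filter_upwards [hev] with n h using h.symm)
  have hΨΦ : Ψ Φ' = 0 := by
    refine tendsto_nhds_unique (hΨev Φ') ?_
    have : (fun n => Φ' (b n)) = fun _ => (0 : 𝕜) := funext fun n => hΦb n
    rw [this]
    exact tendsto_const_nhds
  -- apply the `Lw*w`-hypothesis with the ultrafilter net `x n - Φ'`
  have hpre : Filter.Tendsto
      (fun i : ULift ℕ =>
        (StrongDual.toWeakDual (((fun i : ULift ℕ => x i.down - Φ') i).comp (πℓ e)) : WeakDual 𝕜 B))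
      (Filter.map ULift.up (U : Filter ℕ)) (𝓝 0) := by
    rw [Filter.tendsto_map'_iff]
    have heq : ((fun i : ULift ℕ =>
        (StrongDual.toWeakDual (((fun i : ULift ℕ => x i.down - Φ') i).comp (πℓ e)) : WeakDual 𝕜 B))
          ∘ ULift.up) = fun n : ℕ => (StrongDual.toWeakDual (x n) : WeakDual 𝕜 B) - Φ := by
      funext n
      show (StrongDual.toWeakDual ((x n - Φ').comp (πℓ e)) : WeakDual 𝕜 B) = _
      rw [hcomp, map_sub]
      congr 1
    rw [heq]
    have := hΦ.sub (tendsto_const_nhds (x := Φ) (f := (U : Filter ℕ)))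
    simpa using this
  have hcon := hLww (Filter.map ULift.up (U : Filter ℕ))
    (fun i : ULift ℕ => x i.down - Φ') hpre
  -- evaluate the weak convergence at `Ψ`
  have hev2 : Continuous fun y : WeakSpace 𝕜 (StrongDual 𝕜 B) =>
      (topDualPairing 𝕜 (StrongDual 𝕜 B)).flip y Ψ :=
    WeakBilin.eval_continuous _ Ψ
  have hfin := (hev2.tendsto 0).comp hcon
  rw [Filter.tendsto_map'_iff] at hfin
  have hfin' : Filter.Tendsto (fun n : ℕ => F (x n)) (U : Filter ℕ)
      (𝓝 ((topDualPairing 𝕜 (StrongDual 𝕜 B)).flip (0 : WeakSpace 𝕜 (StrongDual 𝕜 B)) Ψ)) := by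
    refine Filter.Tendsto.congr ?_ hfin
    intro n
    show Ψ ((x n - Φ').comp (πℓ e)) = F (x n)
    rw [hcomp, map_sub, hΨx, hΨΦ, sub_zero]
  have h00 : (topDualPairing 𝕜 (StrongDual 𝕜 B)).flip (0 : WeakSpace 𝕜 (StrongDual 𝕜 B)) Ψ = 0 := by
    exact map_zero Ψ
  rw [h00] at hfin'
  have hlt := (NormedAddCommGroup.tendsto_nhds_zero.1 hfin') (d / 2) (by positivity)
  obtain ⟨n, hn⟩ := hlt.exists
  linarith [hx_F n]
end
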